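/- Optimality of the recursively defined stopping rule for the linear criterion: define T* = min{1 ≤ n ≤ N+1 : Y_n ≥ l_n} with Y_{N+1} = Y_N and l_{N+1} = 0 (so T* ≤ N+1), and ξ_n = ∑_{k=1}^{n} (Y_{k-1} - c·v_k) with Y_0 = 0. Then for every stopping time T with values in {1,...,N+1}, E(ξ_T) ≥ E(ξ_{T*}). -/

import Mathlib

open MeasureTheory Finset

noncomputable def gAux {Ω : Type*} {m0 : MeasurableSpace Ω} (μ : Measure Ω) (N : ℕ)
    (ℱ : ℕ → MeasurableSpace Ω) (Y v : ℕ → Ω → ℝ) (c : ℝ) : ℕ → Ω → ℝ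
  | 0 => fun _ => 0
  | (j + 1) => fun ω => c * v (N + 1 - j) ω +
      (μ[fun ω' => max (gAux μ N ℱ Y v c j ω' - Y (N + 1 - j) ω') 0 | ℱ (N - j)]) ω

lemma telescope_aux (N : ℕ) (f : ℕ → ℝ) : ∀ t, 1 ≤ t → t ≤ N + 1 →
    f t = f 1 + ∑ n ∈ Finset.Icc 1 N, (if n < t then f (n + 1) - f n else 0) := by
  induction N with
  | zero => intro t h1 h2; interval_cases t; simp
  | succ m ih =>
    intro t h1 h2
    rcases Nat.lt_or_ge t (m + 2) with h | h
    · have ht : t ≤ m + 1 := by omega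
      rw [Finset.sum_Icc_succ_top (by omega : 1 ≤ m + 1), if_neg (by omega)]
      have := ih t h1 ht
      linarith
    · have ht : t = m + 2 := by omega
      subst ht
      rw [Finset.sum_Icc_succ_top (by omega : 1 ≤ m + 1), if_pos (by omega)]
      have h2' := ih (m + 1) (by omega) (by omega)
      have heq : ∑ n ∈ Finset.Icc 1 m, (if n < m + 2 then f (n + 1) - f n else 0)
          = ∑ n ∈ Finset.Icc 1 m, (if n < m + 1 then f (n + 1) - f n else 0) := by
        refine Finset.sum_congr rfl fun n hn => ?_
        simp only [Finset.mem_Icc] at hn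
        rw [if_pos (by omega), if_pos (by omega)]
      rw [heq]
      linarith

/-- Optimality of the recursively defined stopping rule for the linear
criterion: with `T* = min{1 ≤ n ≤ N+1 : Y_n ≥ l_n}` (where `Y_{N+1} = Y_N`, `l_{N+1} = 0`)
and `ξ_n = ∑_{k=1}^{n} (Y_{k-1} - c·v_k)` (`Y_0 = 0`), for every stopping time `T`
with values in `{1,...,N+1}`, `E(ξ_T) ≥ E(ξ_{T*})`. -/
theorem optimal_stopping_linear_criterion
    {Ω : Type*} {m0 : MeasurableSpace Ω} (μ : Measure Ω) [IsProbabilityMeasure μ]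
    (N : ℕ) (ℱ : ℕ → MeasurableSpace Ω) (hmono : Monotone ℱ) (hle : ∀ n, ℱ n ≤ m0)
    (Y v : ℕ → Ω → ℝ)
    (hY0 : Y 0 = fun _ => 0) (hYN1 : Y (N + 1) = Y N)
    (hYnn : ∀ n ω, 0 ≤ Y n ω) (hYint : ∀ n, Integrable (Y n) μ)
    (hYmeas : ∀ n, Measurable[ℱ n] (Y n))
    (hvnn : ∀ n ω, 0 ≤ v n ω) (hvint : ∀ n, Integrable (v n) μ)
    (hvmeas : ∀ k, Measurable[ℱ (k - 1)] (v k))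
    (c : ℝ) (hc : 0 < c) (l : ℕ → Ω → ℝ)
    (hlN1 : l (N + 1) = fun _ => 0)
    (hlN : l N = fun ω => c * v (N + 1) ω)
    (hlrec : ∀ n < N, l n =ᵐ[μ] fun ω =>
      c * v (n + 1) ω + (μ[fun ω' => max (l (n + 1) ω' - Y (n + 1) ω') 0 | ℱ n]) ω)
    (Tstar : Ω → ℕ)
    (hTstar : ∀ ω, Tstar ω = sInf {n | 1 ≤ n ∧ n ≤ N + 1 ∧ l n ω ≤ Y n ω})
    (T : Ω → ℕ)
    (hTstop : ∀ n, MeasurableSet[ℱ n] {ω | T ω ≤ n})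
    (hT : ∀ ω, 1 ≤ T ω ∧ T ω ≤ N + 1) :
    ∫ ω, ∑ k ∈ Finset.Icc 1 (Tstar ω), (Y (k - 1) ω - c * v k ω) ∂μ
      ≤ ∫ ω, ∑ k ∈ Finset.Icc 1 (T ω), (Y (k - 1) ω - c * v k ω) ∂μ := by
  classical
  set L : ℕ → Ω → ℝ := fun n => gAux μ N ℱ Y v c (N + 1 - n) with hLdef
  have hLtop : L (N + 1) = fun _ => 0 := by
    simp only [hLdef, Nat.sub_self, gAux]
  have hLrec : ∀ n, n ≤ N → L n = fun ω => c * v (n + 1) ω +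
      (μ[fun ω' => max (L (n + 1) ω' - Y (n + 1) ω') 0 | ℱ n]) ω := by
    intro n hn
    have h1 : N + 1 - n = (N - n) + 1 := by omega
    have h2 : N + 1 - (N - n) = n + 1 := by omega
    have h3 : N - (N - n) = n := by omega
    have h4 : N + 1 - (n + 1) = N - n := by omega
    simp only [hLdef, h1, h4, gAux, h2, h3]
  have hLint : ∀ n, Integrable (L n) μ := by
    intro n
    simp only [hLdef]
    generalize N + 1 - n = j
    induction j with
    | zero => simpa [gAux] using (integrable_const (0:ℝ))
    | succ i _ =>
      simp only [gAux]
      exact (((hvint _).const_mul c).add integrable_condExp)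
  have hLmeas : ∀ n, n ≤ N + 1 → StronglyMeasurable[ℱ n] (L n) := by
    intro n hn
    rcases Nat.lt_or_ge n (N + 1) with h | h
    · rw [hLrec n (by omega)]
      have hv : Measurable[ℱ n] (v (n + 1)) := by
        have := hvmeas (n + 1); simpa using this
      exact ((hv.const_mul c).stronglyMeasurable.add stronglyMeasurable_condExp)
    · have : n = N + 1 := by omega
      subst this; rw [hLtop]; exact stronglyMeasurable_const
  -- l n =ᵐ L n for n ≤ N + 1
  have hLN : L N = fun ω => c * v (N + 1) ω := by
    rw [hLrec N le_rfl]
    have h0 : (fun ω' => max (L (N + 1) ω' - Y (N + 1) ω') 0) = (fun _ => (0:ℝ)) := by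
      funext ω'
      rw [hLtop]
      simp only
      rw [max_eq_right (by simpa using (hYnn (N + 1) ω'))]
    rw [h0]
    have : μ[(fun _ => (0:ℝ)) | ℱ N] = 0 := condExp_zero
    rw [this]
    simp
  have hkey : ∀ j, j ≤ N + 1 → l (N + 1 - j) =ᵐ[μ] L (N + 1 - j) := by
    intro j
    induction j with
    | zero => intro _; simp only [Nat.sub_zero, hlN1, hLtop]; exact Filter.EventuallyEq.rfl
    | succ i ih =>
      intro hj
      rcases Nat.eq_zero_or_pos i with hi | hi
      · subst hi
        simp only [show N + 1 - 1 = N from by omega, hlN, hLN]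
        exact Filter.EventuallyEq.rfl
      · have hn : N + 1 - (i + 1) = N - i := by omega
        rw [hn]
        set n := N - i with hndef
        have hnN : n < N := by omega
        have hsucc : N + 1 - i = n + 1 := by omega
        have ih' : l (n + 1) =ᵐ[μ] L (n + 1) := by
          have := ih (by omega); rwa [hsucc] at this
        have hcond : (μ[fun ω' => max (l (n + 1) ω' - Y (n + 1) ω') 0 | ℱ n])
            =ᵐ[μ] (μ[fun ω' => max (L (n + 1) ω' - Y (n + 1) ω') 0 | ℱ n]) := by
          apply condExp_congr_ae
          filter_upwards [ih'] with ω h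
          rw [h]
        calc l n =ᵐ[μ] _ := hlrec n hnN
        _ =ᵐ[μ] fun ω => c * v (n + 1) ω +
            (μ[fun ω' => max (L (n + 1) ω' - Y (n + 1) ω') 0 | ℱ n]) ω := by
            filter_upwards [hcond] with ω h; rw [h]
        _ = L n := (hLrec n (by omega)).symm
  -- the auxiliary processes
  set W : ℕ → Ω → ℝ := fun n ω => -(max (L n ω - Y n ω) 0) with hWdef
  set M : ℕ → Ω → ℝ := fun n ω =>
    (∑ k ∈ Finset.Icc 1 n, (Y (k - 1) ω - c * v k ω)) + W n ω with hMdef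
  have hWint : ∀ n, Integrable (W n) μ := fun n =>
    (((hLint n).sub (hYint n)).pos_part).neg
  have hMint : ∀ n, Integrable (M n) μ := by
    intro n
    exact (integrable_finset_sum _ fun k _ =>
      (hYint (k - 1)).sub ((hvint k).const_mul c)).add (hWint n)
  have hMstep : ∀ n ω, M (n + 1) ω - M n ω =
      (Y n ω + max (L n ω - Y n ω) 0)
        - (c * v (n + 1) ω + max (L (n + 1) ω - Y (n + 1) ω) 0) := by
    intro n ω
    simp only [hMdef, hWdef]
    rw [Finset.sum_Icc_succ_top (by omega : 1 ≤ n + 1)]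
    simp only [Nat.add_sub_cancel]
    ring
  have hcondkey : ∀ n, 1 ≤ n → n ≤ N →
      (μ[fun ω => M (n + 1) ω - M n ω | ℱ n]) =ᵐ[μ] fun ω => max (Y n ω - L n ω) 0 := by
    intro n h1 hn
    set A : Ω → ℝ := fun ω => Y n ω + max (L n ω - Y n ω) 0 with hAdef
    set B1 : Ω → ℝ := fun ω => c * v (n + 1) ω with hB1def
    set B2 : Ω → ℝ := fun ω => max (L (n + 1) ω - Y (n + 1) ω) 0 with hB2def
    have hA_int : Integrable A μ := (hYint n).add ((hLint n).sub (hYint n)).pos_part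
    have hB1_int : Integrable B1 μ := (hvint (n + 1)).const_mul c
    have hB2_int : Integrable B2 μ := ((hLint (n + 1)).sub (hYint (n + 1))).pos_part
    have hA_sm : StronglyMeasurable[ℱ n] A := by
      have hLn : Measurable[ℱ n] (L n) := (hLmeas n (by omega)).measurable
      exact ((hYmeas n).add ((hLn.sub (hYmeas n)).max measurable_const)).stronglyMeasurable
    have hB1_sm : StronglyMeasurable[ℱ n] B1 := by
      have hv : Measurable[ℱ n] (v (n + 1)) := by have := hvmeas (n + 1); simpa using this
      exact (hv.const_mul c).stronglyMeasurable
    have hfun : (fun ω => M (n + 1) ω - M n ω) = A - B1 - B2 := by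
      funext ω
      have := hMstep n ω
      simp only [Pi.sub_apply, hAdef, hB1def, hB2def]
      linarith
    rw [hfun]
    have hAB : μ[A - B1 - B2|ℱ n] =ᵐ[μ] μ[A|ℱ n] - μ[B1|ℱ n] - μ[B2|ℱ n] := by
      calc μ[A - B1 - B2|ℱ n] =ᵐ[μ] μ[A - B1|ℱ n] - μ[B2|ℱ n] :=
            condExp_sub (hA_int.sub hB1_int) hB2_int (ℱ n)
      _ =ᵐ[μ] μ[A|ℱ n] - μ[B1|ℱ n] - μ[B2|ℱ n] := by
            filter_upwards [condExp_sub hA_int hB1_int (m := ℱ n)] with ω h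
            simp only [Pi.sub_apply] at h ⊢
            rw [h]
    have hAeq : μ[A|ℱ n] = A := condExp_of_stronglyMeasurable (hle n) hA_sm hA_int
    have hB1eq : μ[B1|ℱ n] = B1 := condExp_of_stronglyMeasurable (hle n) hB1_sm hB1_int
    have hLn_eq : L n = fun ω => B1 ω + (μ[B2|ℱ n]) ω := hLrec n hn
    filter_upwards [hAB] with ω h
    simp only [Pi.sub_apply, hAeq, hB1eq] at h
    rw [h]
    have hLω : L n ω = B1 ω + (μ[B2|ℱ n]) ω := by rw [hLn_eq]
    simp only [hAdef]
    rcases le_total (L n ω) (Y n ω) with hc' | hc'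
    · rw [max_eq_right (by linarith), max_eq_left (by linarith)]
      linarith
    · rw [max_eq_left (by linarith), max_eq_right (by linarith)]
      linarith
  -- l n =ᵐ L n for all n ≤ N + 1
  have hlL : ∀ n, n ≤ N + 1 → l n =ᵐ[μ] L n := by
    intro n hn
    have := hkey (N + 1 - n) (by omega)
    rwa [show N + 1 - (N + 1 - n) = n from by omega] at this
  have hae_lL : ∀ᵐ ω ∂μ, ∀ n, n ≤ N + 1 → l n ω = L n ω := by
    have h : ∀ᵐ ω ∂μ, ∀ i : Fin (N + 2), l i ω = L i ω :=
      ae_all_iff.mpr fun i => hlL i (by omega)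
    filter_upwards [h] with ω h n hn
    exact h ⟨n, by omega⟩
  -- the honest stopping rule
  set S : Ω → ℕ := fun ω => sInf {n | 1 ≤ n ∧ n ≤ N + 1 ∧ L n ω ≤ Y n ω} with hSdef
  have hSmem : ∀ ω, S ω ∈ {n | 1 ≤ n ∧ n ≤ N + 1 ∧ L n ω ≤ Y n ω} := by
    intro ω
    refine Nat.sInf_mem ⟨N + 1, ?_⟩
    refine ⟨by omega, le_rfl, ?_⟩
    rw [hLtop]
    exact hYnn (N + 1) ω
  have hS : ∀ ω, 1 ≤ S ω ∧ S ω ≤ N + 1 := fun ω => ⟨(hSmem ω).1, (hSmem ω).2.1⟩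
  have hSnot : ∀ ω n, 1 ≤ n → n < S ω → Y n ω < L n ω := by
    intro ω n h1 h2
    by_contra hcon
    push_neg at hcon
    have hmem : n ∈ {m | 1 ≤ m ∧ m ≤ N + 1 ∧ L m ω ≤ Y m ω} :=
      ⟨h1, by have := (hS ω).2; omega, hcon⟩
    have hle' : S ω ≤ n := Nat.sInf_le hmem
    omega
  have hSstop : ∀ n, n ≤ N → MeasurableSet[ℱ n] {ω | S ω ≤ n} := by
    intro n hn
    have hset : {ω | S ω ≤ n} = ⋃ k ∈ Finset.Icc 1 n, {ω | L k ω ≤ Y k ω} := by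
      ext ω
      simp only [Set.mem_setOf_eq, Set.mem_iUnion, Finset.mem_Icc, exists_prop]
      constructor
      · intro h
        exact ⟨S ω, ⟨(hSmem ω).1, h⟩, (hSmem ω).2.2⟩
      · rintro ⟨k, ⟨hk1, hk2⟩, hk3⟩
        have hmem : k ∈ {m | 1 ≤ m ∧ m ≤ N + 1 ∧ L m ω ≤ Y m ω} := ⟨hk1, by omega, hk3⟩
        exact le_trans (Nat.sInf_le hmem) hk2
    rw [hset]
    refine Finset.measurableSet_biUnion _ fun k hk => ?_
    simp only [Finset.mem_Icc] at hk
    have hkm : MeasurableSet[ℱ k] {ω | L k ω ≤ Y k ω} :=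
      measurableSet_le (hLmeas k (by omega)).measurable (hYmeas k)
    exact hmono hk.2 _ hkm
  -- main decomposition for a stopping rule R
  have hmain : ∀ R : Ω → ℕ, (∀ ω, 1 ≤ R ω ∧ R ω ≤ N + 1) →
      (∀ n, 1 ≤ n → n ≤ N → MeasurableSet[ℱ n] {ω | R ω ≤ n}) →
      Integrable (fun ω => M (R ω) ω) μ ∧
      ∫ ω, M (R ω) ω ∂μ = (∫ ω, M 1 ω ∂μ)
        + ∑ n ∈ Finset.Icc 1 N, ∫ ω in {ω | n < R ω}, max (Y n ω - L n ω) 0 ∂μ := by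
    intro R hR hRstop
    have hmeasF : ∀ n, 1 ≤ n → n ≤ N → MeasurableSet[ℱ n] {ω | n < R ω} := by
      intro n h1 h2
      have hco : {ω | n < R ω} = {ω | R ω ≤ n}ᶜ := by
        ext ω; simp only [Set.mem_compl_iff, Set.mem_setOf_eq, not_le]
      rw [hco]
      exact (hRstop n h1 h2).compl
    have hmeas0 : ∀ n, 1 ≤ n → n ≤ N → MeasurableSet {ω | n < R ω} :=
      fun n h1 h2 => hle n _ (hmeasF n h1 h2)
    have hind : ∀ n : ℕ, (fun ω => if n < R ω then M (n + 1) ω - M n ω else 0)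
        = Set.indicator {ω | n < R ω} (fun ω => M (n + 1) ω - M n ω) := by
      intro n; funext ω
      by_cases h : n < R ω
      · rw [if_pos h]
        exact (Set.indicator_of_mem (show ω ∈ {ω | n < R ω} from h) (fun ω => M (n + 1) ω - M n ω)).symm
      · rw [if_neg h]
        exact (Set.indicator_of_notMem (show ω ∉ {ω | n < R ω} from h) (fun ω => M (n + 1) ω - M n ω)).symm
    have hite_int : ∀ n ∈ Finset.Icc 1 N,
        Integrable (fun ω => if n < R ω then M (n + 1) ω - M n ω else 0) μ := by
      intro n hn
      simp only [Finset.mem_Icc] at hn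
      rw [hind n]
      exact ((hMint (n + 1)).sub (hMint n)).indicator (hmeas0 n hn.1 hn.2)
    have hdecomp : (fun ω => M (R ω) ω) = fun ω =>
        M 1 ω + ∑ n ∈ Finset.Icc 1 N, (if n < R ω then M (n + 1) ω - M n ω else 0) :=
      funext fun ω => telescope_aux N (fun k => M k ω) (R ω) (hR ω).1 (hR ω).2
    have hsum_int : Integrable (fun ω => ∑ n ∈ Finset.Icc 1 N,
        (if n < R ω then M (n + 1) ω - M n ω else 0)) μ := integrable_finset_sum _ hite_int
    constructor
    · rw [hdecomp]
      exact (hMint 1).add hsum_int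
    · rw [hdecomp, integral_add (hMint 1) hsum_int, integral_finset_sum _ hite_int]
      congr 1
      refine Finset.sum_congr rfl fun n hn => ?_
      simp only [Finset.mem_Icc] at hn
      have hdiff_int : Integrable (fun ω => M (n + 1) ω - M n ω) μ :=
        (hMint (n + 1)).sub (hMint n)
      rw [hind n, integral_indicator (hmeas0 n hn.1 hn.2),
        ← setIntegral_condExp (hle n) hdiff_int (hmeasF n hn.1 hn.2)]
      exact integral_congr_ae (ae_restrict_of_ae (hcondkey n hn.1 hn.2))
  -- the W-value at time T
  have hTk_meas : ∀ k, 1 ≤ k → MeasurableSet {ω | T ω = k} := by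
    intro k hk
    have hset : {ω | T ω = k} = {ω | T ω ≤ k} \ {ω | T ω ≤ k - 1} := by
      ext ω
      simp only [Set.mem_setOf_eq, Set.mem_diff, not_le]
      omega
    rw [hset]
    exact (hle k _ (hTstop k)).diff (hle (k - 1) _ (hTstop (k - 1)))
  have hWT_eq : (fun ω => W (T ω) ω)
      = fun ω => ∑ k ∈ Finset.Icc 1 (N + 1), Set.indicator {ω' | T ω' = k} (W k) ω := by
    funext ω
    rw [Finset.sum_eq_single (T ω)]
    · exact (Set.indicator_of_mem (show ω ∈ {ω' | T ω' = T ω} from rfl) (W (T ω))).symm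
    · intro k _ hne
      have hnm : ω ∉ {ω' | T ω' = k} := fun h => hne (show T ω = k from h).symm
      exact Set.indicator_of_notMem hnm (W k)
    · intro h
      exact absurd (Finset.mem_Icc.mpr ⟨(hT ω).1, (hT ω).2⟩) h
  have hWT_term_int : ∀ k ∈ Finset.Icc 1 (N + 1),
      Integrable (Set.indicator {ω' | T ω' = k} (W k)) μ := by
    intro k hk
    simp only [Finset.mem_Icc] at hk
    exact (hWint k).indicator (hTk_meas k hk.1)
  have hWT_int : Integrable (fun ω => W (T ω) ω) μ := by
    rw [hWT_eq]
    exact integrable_finset_sum _ hWT_term_int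
  have hWT_nonpos : ∫ ω, W (T ω) ω ∂μ ≤ 0 := by
    rw [hWT_eq, integral_finset_sum _ hWT_term_int]
    refine Finset.sum_nonpos fun k hk => ?_
    simp only [Finset.mem_Icc] at hk
    rw [integral_indicator (hTk_meas k hk.1)]
    refine setIntegral_nonpos (hTk_meas k hk.1) fun ω _ => ?_
    simp only [hWdef]
    exact neg_nonpos.mpr (le_max_right _ _)
  -- decompositions for T and S
  obtain ⟨hMT_int, hMT_val⟩ := hmain T hT (fun n _ _ => hTstop n)
  obtain ⟨-, hMS_val⟩ := hmain S hS (fun n _ h2 => hSstop n h2)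
  -- the S-side terms vanish
  have hS_terms : ∀ n ∈ Finset.Icc 1 N,
      ∫ ω in {ω | n < S ω}, max (Y n ω - L n ω) 0 ∂μ = 0 := by
    intro n hn
    simp only [Finset.mem_Icc] at hn
    have hms : MeasurableSet {ω | n < S ω} := by
      have hco : {ω | n < S ω} = {ω | S ω ≤ n}ᶜ := by
        ext ω; simp only [Set.mem_compl_iff, Set.mem_setOf_eq, not_le]
      rw [hco]
      exact hle n _ ((hSstop n hn.2).compl)
    have hzero : ∀ ω ∈ {ω | n < S ω}, max (Y n ω - L n ω) 0 = (fun _ : Ω => (0:ℝ)) ω :=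
      fun ω hω => max_eq_right (by have := hSnot ω n hn.1 hω; linarith)
    rw [setIntegral_congr_fun hms hzero]
    simp
  have hMS_eq : ∫ ω, M (S ω) ω ∂μ = ∫ ω, M 1 ω ∂μ := by
    rw [hMS_val, Finset.sum_congr rfl hS_terms]
    simp
  -- ξ at time S equals M at time S
  have hxiS : (fun ω => ∑ k ∈ Finset.Icc 1 (S ω), (Y (k - 1) ω - c * v k ω))
      = fun ω => M (S ω) ω := by
    funext ω
    have hmax : max (L (S ω) ω - Y (S ω) ω) 0 = 0 :=
      max_eq_right (by have := (hSmem ω).2.2; linarith)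
    simp only [hMdef, hWdef, hmax]
    ring
  -- ξ at time T equals M at time T minus W at time T
  have hxiT : (fun ω => ∑ k ∈ Finset.Icc 1 (T ω), (Y (k - 1) ω - c * v k ω))
      = fun ω => M (T ω) ω - W (T ω) ω := by
    funext ω
    simp only [hMdef]
    ring
  -- assemble
  have hTstarS : (fun ω => ∑ k ∈ Finset.Icc 1 (Tstar ω), (Y (k - 1) ω - c * v k ω))
      =ᵐ[μ] fun ω => ∑ k ∈ Finset.Icc 1 (S ω), (Y (k - 1) ω - c * v k ω) := by
    filter_upwards [hae_lL] with ω h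
    have hset : {n | 1 ≤ n ∧ n ≤ N + 1 ∧ l n ω ≤ Y n ω}
        = {n | 1 ≤ n ∧ n ≤ N + 1 ∧ L n ω ≤ Y n ω} := by
      ext k
      simp only [Set.mem_setOf_eq]
      constructor
      · rintro ⟨h1, h2, h3⟩
        exact ⟨h1, h2, by rwa [h k h2] at h3⟩
      · rintro ⟨h1, h2, h3⟩
        exact ⟨h1, h2, by rwa [← h k h2] at h3⟩
    have : Tstar ω = S ω := by rw [hTstar ω, hset, hSdef]
    rw [this]
  have hlhs : ∫ ω, ∑ k ∈ Finset.Icc 1 (Tstar ω), (Y (k - 1) ω - c * v k ω) ∂μ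
      = ∫ ω, M 1 ω ∂μ := by
    rw [integral_congr_ae hTstarS, hxiS, hMS_eq]
  have hT_sum_nonneg : 0 ≤ ∑ n ∈ Finset.Icc 1 N,
      ∫ ω in {ω | n < T ω}, max (Y n ω - L n ω) 0 ∂μ := by
    refine Finset.sum_nonneg fun n hn => ?_
    simp only [Finset.mem_Icc] at hn
    have hms : MeasurableSet {ω | n < T ω} := by
      have hco : {ω | n < T ω} = {ω | T ω ≤ n}ᶜ := by
        ext ω; simp only [Set.mem_compl_iff, Set.mem_setOf_eq, not_le]
      rw [hco]
      exact hle n _ ((hTstop n).compl)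
    exact setIntegral_nonneg hms fun ω _ => le_max_right _ _
  have hrhs : ∫ ω, M 1 ω ∂μ ≤ ∫ ω, ∑ k ∈ Finset.Icc 1 (T ω), (Y (k - 1) ω - c * v k ω) ∂μ := by
    rw [hxiT, integral_sub hMT_int hWT_int, hMT_val]
    linarith
  rw [hlhs]
  exact hrhs
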